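/- For k ≥ 2, every homomorphism from the odd wheel W_{2k+1} to itself is frozen; in particular it maps the hub α to α and restricts to an automorphism of the outer (2k+1)-cycle. -/

import Mathlib

def IsHom {A B : Type*} (AdjG : A → A → Prop) (AdjH : B → B → Prop) (f : A → B) : Prop :=
  ∀ u v : A, AdjG u v → AdjH (f u) (f v)

open Classical in
/-- The map obtained from `f` by recolouring the vertex `v` to the colour `b`. -/
noncomputable def recol {A B : Type*} (f : A → B) (v : A) (b : B) : A → B :=
  fun x => if x = v then b else f x

/-- `f` is frozen: a homomorphism such that no single-vertex recolouring is one. -/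
def Frozen {A B : Type*} (AdjG : A → A → Prop) (AdjH : B → B → Prop) (f : A → B) : Prop :=
  IsHom AdjG AdjH f ∧ ∀ (v : A) (b : B), b ≠ f v → ¬ IsHom AdjG AdjH (recol f v b)

/-- The vertex set of the wheel `W_{2k+1}`: `none` is the hub `α`, `some i` the rim. -/
abbrev WheelV (k : ℕ) : Type := Option (ZMod (2 * k + 1))

/-- Adjacency in the wheel `W_{2k+1}`: the hub is adjacent to every rim vertex and rim
vertices `i, j` are adjacent iff they are consecutive on the `(2k+1)`-cycle. -/
def WheelAdj (k : ℕ) : WheelV k → WheelV k → Prop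
  | none, none => False
  | none, some _ => True
  | some _, none => True
  | some i, some j => j = i + 1 ∨ i = j + 1

lemma cne (k : ℕ) (hk : 2 ≤ k) {m : ℕ} (h1 : 0 < m) (h2 : m < 5) :
    (m : ZMod (2*k+1)) ≠ 0 := by
  rw [Ne, ZMod.natCast_eq_zero_iff]
  intro h
  have := Nat.le_of_dvd h1 h
  omega

lemma one_ne (k : ℕ) (hk : 2 ≤ k) : (1 : ZMod (2*k+1)) ≠ 0 := by
  have := cne k hk (m := 1) one_pos (by norm_num); simpa using this

lemma two_ne (k : ℕ) (hk : 2 ≤ k) : (2 : ZMod (2*k+1)) ≠ 0 := by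
  have := cne k hk (m := 2) two_pos (by norm_num); push_cast at this; exact this

lemma three_ne (k : ℕ) (hk : 2 ≤ k) : (3 : ZMod (2*k+1)) ≠ 0 := by
  have := cne k hk (m := 3) (by norm_num) (by norm_num); push_cast at this; exact this

lemma four_ne (k : ℕ) (hk : 2 ≤ k) : (4 : ZMod (2*k+1)) ≠ 0 := by
  have := cne k hk (m := 4) (by norm_num) (by norm_num); push_cast at this; exact this

lemma adj_ss (k : ℕ) (i j : ZMod (2*k+1)) :
    WheelAdj k (some i) (some j) ↔ (j = i + 1 ∨ i = j + 1) := Iff.rfl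

lemma hub_fixed (k : ℕ) (hk : 2 ≤ k) (f : WheelV k → WheelV k)
    (hf : IsHom (WheelAdj k) (WheelAdj k) f) : f none = none := by
  classical
  by_contra hne
  obtain ⟨c, hc⟩ : ∃ c, f none = some c := by
    cases h : f none with
    | none => exact absurd h hne
    | some c => exact ⟨c, rfl⟩
  -- classification
  have hclass : ∀ i : ZMod (2*k+1),
      f (some i) = none ∨ f (some i) = some (c+1) ∨ f (some i) = some (c-1) := by
    intro i
    have h := hf none (some i) trivial
    rw [hc] at h
    cases hfi : f (some i) with
    | none => exact Or.inl rfl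
    | some j =>
      rw [hfi, adj_ss] at h
      rcases h with h | h
      · exact Or.inr (Or.inl (by rw [h]))
      · exact Or.inr (Or.inr (by congr 1; linear_combination -h))
  set b : ZMod (2*k+1) → Bool := fun i => decide (f (some i) = none) with hbdef
  have halt : ∀ i : ZMod (2*k+1), b (i+1) = ! b i := by
    intro i
    have hadj : WheelAdj k (f (some i)) (f (some (i+1))) :=
      hf (some i) (some (i+1)) (Or.inl rfl)
    rcases hclass i with h1 | h1 | h1 <;> rcases hclass (i+1) with h2 | h2 | h2
    · rw [h1, h2] at hadj; exact hadj.elim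
    · simp [hbdef, h1, h2]
    · simp [hbdef, h1, h2]
    · simp [hbdef, h1, h2]
    · rw [h1, h2] at hadj
      rcases hadj with h | h
      · exact absurd (by linear_combination -h : (1 : ZMod (2*k+1)) = 0) (one_ne k hk)
      · exact absurd (by linear_combination -h : (1 : ZMod (2*k+1)) = 0) (one_ne k hk)
    · rw [h1, h2] at hadj
      rcases hadj with h | h
      · exact absurd (by linear_combination -h : (3 : ZMod (2*k+1)) = 0) (three_ne k hk)
      · exact absurd (by linear_combination h : (1 : ZMod (2*k+1)) = 0) (one_ne k hk)
    · simp [hbdef, h1, h2]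
    · rw [h1, h2] at hadj
      rcases hadj with h | h
      · exact absurd (by linear_combination h : (1 : ZMod (2*k+1)) = 0) (one_ne k hk)
      · exact absurd (by linear_combination -h : (3 : ZMod (2*k+1)) = 0) (three_ne k hk)
    · rw [h1, h2] at hadj
      rcases hadj with h | h
      · exact absurd (by linear_combination -h : (1 : ZMod (2*k+1)) = 0) (one_ne k hk)
      · exact absurd (by linear_combination -h : (1 : ZMod (2*k+1)) = 0) (one_ne k hk)
  have key : ∀ m : ℕ, b ((m : ℕ) : ZMod (2*k+1)) = (if Even m then b 0 else ! b 0) := by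
    intro m
    induction m with
    | zero => simp
    | succ m ih =>
      have hcast : ((m+1 : ℕ) : ZMod (2*k+1)) = ((m:ℕ) : ZMod (2*k+1)) + 1 := by push_cast; ring
      rw [hcast, halt, ih]
      by_cases h : Even m
      · rw [if_pos h, if_neg (by simp [Nat.even_add_one, h])]
      · rw [if_neg h, if_pos (by simp [Nat.even_add_one, h]), Bool.not_not]
  have hfin := key (2*k+1)
  rw [ZMod.natCast_self] at hfin
  have : ¬ Even (2*k+1) := by simp [Nat.even_add_one, parity_simps]
  rw [if_neg this] at hfin
  exact (Bool.eq_not_self (b 0)).mp hfin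

lemma steps_const (k : ℕ) (hk : 2 ≤ k) (g : ZMod (2*k+1) → ZMod (2*k+1))
    (hg : ∀ i, g (i+1) = g i + 1 ∨ g (i+1) = g i - 1) :
    (∀ i, g (i+1) = g i + 1) ∨ (∀ i, g (i+1) = g i - 1) := by
  classical
  obtain ⟨s, hs1, hs2⟩ : ∃ s : ZMod (2*k+1) → ℤ,
      (∀ i, s i = 1 ∨ s i = -1) ∧ (∀ i, g (i+1) = g i + ((s i : ℤ) : ZMod (2*k+1))) := by
    refine ⟨fun i => if g (i+1) = g i + 1 then 1 else -1, fun i => ?_, fun i => ?_⟩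
    · by_cases h : g (i+1) = g i + 1 <;> simp [h]
    · by_cases h : g (i+1) = g i + 1
      · simpa [h] using h
      · rcases hg i with h' | h'
        · exact absurd h' h
        · simp only [h, if_neg, if_false]
          push_cast
          rw [h', sub_eq_add_neg]
  have key : ∀ m : ℕ, g (m : ZMod (2*k+1)) =
      g 0 + ((∑ j ∈ Finset.range m, s (j : ZMod (2*k+1)) : ℤ) : ZMod (2*k+1)) := by
    intro m
    induction m with
    | zero => simp
    | succ m ih =>
      have hc : ((m+1 : ℕ) : ZMod (2*k+1)) = (m : ZMod (2*k+1)) + 1 := by push_cast; ring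
      rw [hc, hs2, ih, Finset.sum_range_succ]
      push_cast
      ring
  set S : ℤ := ∑ j ∈ Finset.range (2*k+1), s (j : ZMod (2*k+1)) with hS
  have hzero : ((S : ℤ) : ZMod (2*k+1)) = 0 := by
    have h0 := key (2*k+1)
    rw [ZMod.natCast_self, left_eq_add] at h0
    exact h0
  have hdvd : ((2*k+1 : ℕ) : ℤ) ∣ S := (ZMod.intCast_zmod_eq_zero_iff_dvd S (2*k+1)).mp hzero
  have habs : |S| ≤ (2*k+1 : ℤ) := by
    calc |S| ≤ ∑ j ∈ Finset.range (2*k+1), |s (j : ZMod (2*k+1))| :=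
          Finset.abs_sum_le_sum_abs _ _
    _ ≤ ∑ _j ∈ Finset.range (2*k+1), 1 := by
        refine Finset.sum_le_sum fun j _ => ?_
        rcases hs1 (j : ZMod (2*k+1)) with h | h <;> simp [h]
    _ = (2*k+1 : ℤ) := by simp
  have hodd : S % 2 = 1 := by
    rw [hS, Finset.sum_int_mod]
    have he : ∀ j ∈ Finset.range (2*k+1), s (j : ZMod (2*k+1)) % 2 = 1 % 2 := by
      intro j _
      rcases hs1 (j : ZMod (2*k+1)) with h | h <;> rw [h] <;> decide
    rw [Finset.sum_congr rfl he]
    simp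
  have hSne : S ≠ 0 := fun h => by simp [h] at hodd
  obtain ⟨c, hc⟩ := hdvd
  have hnpos : (0:ℤ) < ((2*k+1:ℕ):ℤ) := by positivity
  have hc1 : c = 1 ∨ c = -1 := by
    have hcne : c ≠ 0 := by rintro rfl; simp at hc; exact hSne hc
    have h1 : |S| = ((2*k+1:ℕ):ℤ) * |c| := by rw [hc, abs_mul, abs_of_pos hnpos]
    have h2 : ((2*k+1:ℕ):ℤ) * |c| ≤ ((2*k+1:ℕ):ℤ) * 1 := by
      rw [← h1, mul_one]; exact le_trans habs (by push_cast; omega)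
    have h3 : |c| ≤ 1 := le_of_mul_le_mul_left h2 hnpos
    have h4 : 1 ≤ |c| := Int.one_le_abs (by omega)
    have : |c| = 1 := le_antisymm h3 h4
    exact (abs_eq (by norm_num)).mp this
  have extract : ∀ (v : ℤ), (∀ j ∈ Finset.range (2*k+1), s (j : ZMod (2*k+1)) = v) →
      ∀ i : ZMod (2*k+1), s i = v := fun v hall i => by
    have hi : i = ((i.val : ℕ) : ZMod (2*k+1)) := (ZMod.natCast_zmod_val i).symm
    rw [hi]
    exact hall i.val (Finset.mem_range.mpr i.val_lt)
  rcases hc1 with rfl | rfl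
  · left
    have hall : ∀ j ∈ Finset.range (2*k+1), s (j : ZMod (2*k+1)) = 1 := by
      have hnn : ∀ j ∈ Finset.range (2*k+1), (0:ℤ) ≤ 1 - s ((j:ℕ) : ZMod (2*k+1)) := by
        intro j _; rcases hs1 ((j:ℕ) : ZMod (2*k+1)) with h | h <;> simp [h]
      have hsum0 : ∑ j ∈ Finset.range (2*k+1), (1 - s ((j:ℕ) : ZMod (2*k+1))) = 0 := by
        rw [Finset.sum_sub_distrib, ← hS, hc]
        push_cast
        simp
      intro j hj
      have h0 := (Finset.sum_eq_zero_iff_of_nonneg hnn).mp hsum0 j hj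
      linarith
    intro i
    have h := hs2 i
    rw [extract 1 hall i] at h
    simpa using h
  · right
    have hall : ∀ j ∈ Finset.range (2*k+1), s (j : ZMod (2*k+1)) = -1 := by
      have hnn : ∀ j ∈ Finset.range (2*k+1), (0:ℤ) ≤ s ((j:ℕ) : ZMod (2*k+1)) + 1 := by
        intro j _; rcases hs1 ((j:ℕ) : ZMod (2*k+1)) with h | h <;> simp [h]
      have hsum0 : ∑ j ∈ Finset.range (2*k+1), (s ((j:ℕ) : ZMod (2*k+1)) + 1) = 0 := by
        rw [Finset.sum_add_distrib, ← hS, hc]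
        push_cast
        simp
      intro j hj
      have h0 := (Finset.sum_eq_zero_iff_of_nonneg hnn).mp hsum0 j hj
      linarith
    intro i
    have h := hs2 i
    rw [extract (-1) hall i] at h
    push_cast at h
    rw [h, sub_eq_add_neg]


/-- For `k ≥ 2`, every homomorphism from the odd wheel `W_{2k+1}` to itself is frozen;
in particular it maps the hub to the hub and is an automorphism (it is bijective and
restricts to an automorphism of the outer `(2k+1)`-cycle). -/
theorem stmt_12 (k : ℕ) (hk : 2 ≤ k) (f : WheelV k → WheelV k)
    (hf : IsHom (WheelAdj k) (WheelAdj k) f) :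
    Frozen (WheelAdj k) (WheelAdj k) f ∧ f none = none ∧ Function.Bijective f := by
  classical
  have hnone : f none = none := hub_fixed k hk f hf
  -- rim map
  have hrim : ∀ i : ZMod (2*k+1), ∃ j, f (some i) = some j := by
    intro i
    have h := hf (some i) none trivial
    rw [hnone] at h
    cases hfi : f (some i) with
    | none => rw [hfi] at h; exact h.elim
    | some j => exact ⟨j, rfl⟩
  choose g hg using hrim
  have hgstep : ∀ i : ZMod (2*k+1), g (i+1) = g i + 1 ∨ g (i+1) = g i - 1 := by
    intro i
    have h := hf (some i) (some (i+1)) (Or.inl rfl)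
    rw [hg i, hg (i+1), adj_ss] at h
    rcases h with h | h
    · exact Or.inl h
    · exact Or.inr (by linear_combination -h)
  have hsc := steps_const k hk g hgstep
  -- closed form and bijectivity of g
  have hgbij : Function.Bijective g := by
    rcases hsc with hp | hp
    · have hform : ∀ m : ℕ, g ((m : ℕ) : ZMod (2*k+1)) = g 0 + m := by
        intro m
        induction m with
        | zero => simp
        | succ m ih =>
          have hcast : ((m+1 : ℕ) : ZMod (2*k+1)) = ((m:ℕ) : ZMod (2*k+1)) + 1 := by
            push_cast; ring
          rw [hcast, hp, ih]; push_cast; ring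
      have : g = fun i => g 0 + i := by
        funext i
        have h0 := hform i.val
        rwa [ZMod.natCast_zmod_val] at h0
      rw [this]
      exact (Equiv.addLeft (g 0)).bijective
    · have hform : ∀ m : ℕ, g ((m : ℕ) : ZMod (2*k+1)) = g 0 - m := by
        intro m
        induction m with
        | zero => simp
        | succ m ih =>
          have hcast : ((m+1 : ℕ) : ZMod (2*k+1)) = ((m:ℕ) : ZMod (2*k+1)) + 1 := by
            push_cast; ring
          rw [hcast, hp, ih]; push_cast; ring
      have : g = fun i => g 0 - i := by
        funext i
        have h0 := hform i.val
        rwa [ZMod.natCast_zmod_val] at h0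
      rw [this]
      exact (Equiv.subLeft (g 0)).bijective
  have hfbij : Function.Bijective f := by
    constructor
    · intro a b hab
      match a, b with
      | none, none => rfl
      | none, some j => rw [hnone, hg j] at hab; exact absurd hab (by simp)
      | some i, none => rw [hnone, hg i] at hab; exact absurd hab (by simp)
      | some i, some j =>
        rw [hg i, hg j] at hab
        rw [hgbij.injective (Option.some_injective _ hab)]
    · intro y
      cases y with
      | none => exact ⟨none, hnone⟩
      | some m =>
        obtain ⟨i, hi⟩ := hgbij.surjective m
        exact ⟨some i, by rw [hg i, hi]⟩
  refine ⟨⟨hf, ?_⟩, hnone, hfbij⟩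
  intro v b hb hcontra
  have hr1 : recol f v b v = b := by simp [recol]
  have hr2 : ∀ x, x ≠ v → recol f v b x = f x := by intro x hx; simp [recol, hx]
  cases v with
  | none =>
    rw [hnone] at hb
    cases b with
    | none => exact hb rfl
    | some m =>
      obtain ⟨i, hi⟩ := hgbij.surjective m
      have h := hcontra none (some i) trivial
      rw [hr1, hr2 (some i) (by simp), hg i, hi, adj_ss] at h
      rcases h with h | h
      · exact one_ne k hk (by linear_combination -h)
      · exact one_ne k hk (by linear_combination -h)
  | some i =>
    rw [hg i] at hb
    cases b with
    | none =>
      have h := hcontra (some i) none trivial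
      rw [hr1, hr2 none (by simp), hnone] at h
      exact h
    | some m =>
      have hmne : m ≠ g i := fun h => hb (by rw [h])
      have hip : (i : ZMod (2*k+1)) + 1 ≠ i := by
        intro h; exact one_ne k hk (by linear_combination h)
      have him : (i : ZMod (2*k+1)) - 1 ≠ i := by
        intro h; exact one_ne k hk (by linear_combination -h)
      have hA := hcontra (some (i+1)) (some i) (Or.inr rfl)
      rw [hr1, hr2 (some (i+1)) (by simpa using hip), hg (i+1), adj_ss] at hA
      have hB := hcontra (some (i-1)) (some i) (Or.inl (by ring))
      rw [hr1, hr2 (some (i-1)) (by simpa using him), hg (i-1), adj_ss] at hB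
      rcases hsc with hall | hall
      · have e1 : g (i+1) = g i + 1 := hall i
        have e2 : g (i-1) = g i - 1 := by
          have h0 := hall (i-1); rw [sub_add_cancel] at h0; linear_combination -h0
        rw [e1] at hA; rw [e2] at hB
        rcases hA with hA | hA <;> rcases hB with hB | hB
        · exact two_ne k hk (by linear_combination hB - hA)
        · exact four_ne k hk (by linear_combination -hA - hB)
        · exact hmne (by linear_combination hB)
        · exact hmne (by linear_combination -hA)
      · have e1 : g (i+1) = g i - 1 := hall i
        have e2 : g (i-1) = g i + 1 := by
          have h0 := hall (i-1); rw [sub_add_cancel] at h0; linear_combination -h0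
        rw [e1] at hA; rw [e2] at hB
        rcases hA with hA | hA <;> rcases hB with hB | hB
        · exact hmne (by linear_combination hA)
        · exact hmne (by linear_combination hA)
        · exact four_ne k hk (by linear_combination -hA - hB)
        · exact two_ne k hk (by linear_combination hB - hA)
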